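/- Let (Ω, 𝒜, T, f) be a dynamic Markov process, model M with valuation v, and φ a formula. For rationals r₁,…,r_k, r ∈ [0,1], define the iterated set L_{r₁…r_k r}(A) := L_{r₁}(L_{r₂}(…L_r(A)…)) where L_s(B) := {w | T(w,B) ≥ s}. Then for any measurable A and any r, L_{r₁…r_k r}(A) = ⋂_{s ∈ ℚ, 0 ≤ s < r} L_{r₁…r_k s}(A). -/

import Mathlib

open MeasureTheory

/-- One application of the probability operator `L_s` as a set operation. -/
def Lset {Ω : Type*} [MeasurableSpace Ω] (T : Ω → Measure Ω) (s : ℚ) (B : Set Ω) : Set Ω :=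
  {w | ENNReal.ofReal (s : ℝ) ≤ T w B}

/-- The iterated operator `L_{r₁…r_k}` applied to a set. -/
def LIter {Ω : Type*} [MeasurableSpace Ω] (T : Ω → Measure Ω) (l : List ℚ) (A : Set Ω) :
    Set Ω :=
  l.foldr (fun r B => Lset T r B) A

lemma Lset_mono {Ω : Type*} [MeasurableSpace Ω] (T : Ω → Measure Ω) (s : ℚ) {B C : Set Ω}
    (h : B ⊆ C) : Lset T s B ⊆ Lset T s C :=
  fun _ hw => le_trans hw (measure_mono h)

lemma Lset_anti {Ω : Type*} [MeasurableSpace Ω] (T : Ω → Measure Ω) {s t : ℚ} (h : s ≤ t)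
    (B : Set Ω) : Lset T t B ⊆ Lset T s B :=
  fun _ hw => le_trans (ENNReal.ofReal_le_ofReal (by exact_mod_cast h)) hw

lemma LIter_mono {Ω : Type*} [MeasurableSpace Ω] (T : Ω → Measure Ω) (l : List ℚ) {B C : Set Ω}
    (h : B ⊆ C) : LIter T l B ⊆ LIter T l C := by
  induction l with
  | nil => exact h
  | cons q l ih => exact Lset_mono T q ih

lemma Lset_measurable {Ω : Type*} [MeasurableSpace Ω] (T : Ω → Measure Ω)
    (hmeas : ∀ A : Set Ω, MeasurableSet A → Measurable fun w => T w A)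
    (s : ℚ) {B : Set Ω} (hB : MeasurableSet B) : MeasurableSet (Lset T s B) :=
  (hmeas B hB) measurableSet_Ici

lemma LIter_measurable {Ω : Type*} [MeasurableSpace Ω] (T : Ω → Measure Ω)
    (hmeas : ∀ A : Set Ω, MeasurableSet A → Measurable fun w => T w A)
    (l : List ℚ) {A : Set Ω} (hA : MeasurableSet A) : MeasurableSet (LIter T l A) := by
  induction l with
  | nil => exact hA
  | cons q l ih => exact Lset_measurable T hmeas q ih

lemma Lset_univ {Ω : Type*} [MeasurableSpace Ω] (T : Ω → Measure Ω)
    (hprob : ∀ w, IsProbabilityMeasure (T w)) {q : ℚ} (hq : q ≤ 1) :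
    Lset T q Set.univ = Set.univ := by
  ext w
  have := hprob w
  simp only [Lset, Set.mem_setOf_eq, measure_univ, Set.mem_univ, iff_true]
  exact ENNReal.ofReal_le_one.mpr (by exact_mod_cast hq)

lemma LIter_univ {Ω : Type*} [MeasurableSpace Ω] (T : Ω → Measure Ω)
    (hprob : ∀ w, IsProbabilityMeasure (T w)) (l : List ℚ) (hl : ∀ q ∈ l, q ≤ 1) :
    LIter T l Set.univ = Set.univ := by
  induction l with
  | nil => rfl
  | cons q l ih =>
    have : LIter T (q :: l) Set.univ = Lset T q (LIter T l Set.univ) := rfl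
    rw [this, ih (fun p hp => hl p (List.mem_cons_of_mem q hp)),
      Lset_univ T hprob (hl q List.mem_cons_self)]

/-- Fact 2.8: `L_{r₁…r_k r}(A)` is the intersection over rationals `0 ≤ s < r` of
`L_{r₁…r_k s}(A)`. -/
theorem stmt_18 {Ω : Type*} [MeasurableSpace Ω] (T : Ω → Measure Ω)
    (hprob : ∀ w, IsProbabilityMeasure (T w))
    (hmeas : ∀ A : Set Ω, MeasurableSet A → Measurable fun w => T w A)
    (rs : List ℚ) (hrs : ∀ q ∈ rs, 0 ≤ q ∧ q ≤ 1)
    (r : ℚ) (hr0 : 0 ≤ r) (hr1 : r ≤ 1)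
    (A : Set Ω) (hA : MeasurableSet A) :
    LIter T (rs ++ [r]) A =
      ⋂ s : {s : ℚ // 0 ≤ s ∧ s < r}, LIter T (rs ++ [(s : ℚ)]) A := by
  induction rs with
  | nil =>
    ext w
    have hne : T w A ≠ ⊤ := (measure_ne_top (T w) A)
    simp only [List.nil_append, Set.mem_iInter, Subtype.forall]
    show ENNReal.ofReal (r : ℝ) ≤ T w A ↔
      ∀ (s : ℚ), 0 ≤ s ∧ s < r → ENNReal.ofReal (s : ℝ) ≤ T w A
    constructor
    · intro h s hs
      exact le_trans (ENNReal.ofReal_le_ofReal (by exact_mod_cast hs.2.le)) h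
    · intro h
      by_contra hlt
      push_neg at hlt
      have h1 : (T w A).toReal < (r : ℝ) :=
        (ENNReal.lt_ofReal_iff_toReal_lt hne).mp hlt
      obtain ⟨q, hq1, hq2⟩ := exists_rat_btwn h1
      have hq0 : (0 : ℚ) ≤ q := by
        have : (0 : ℝ) ≤ (q : ℝ) := le_trans ENNReal.toReal_nonneg hq1.le
        exact_mod_cast this
      have := h q ⟨hq0, by exact_mod_cast hq2⟩
      exact absurd ((ENNReal.lt_ofReal_iff_toReal_lt hne).mpr hq1) (not_lt_of_ge this)
  | cons q rs ih =>
    have hq := hrs q List.mem_cons_self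
    have hrs' : ∀ p ∈ rs, 0 ≤ p ∧ p ≤ 1 := fun p hp => hrs p (List.mem_cons_of_mem q hp)
    have hstep : LIter T ((q :: rs) ++ [r]) A
        = Lset T q (LIter T (rs ++ [r]) A) := rfl
    rw [hstep, ih hrs']
    by_cases hrpos : 0 < r
    · -- nonempty, countable, directed family
      haveI : Nonempty {s : ℚ // 0 ≤ s ∧ s < r} := ⟨⟨0, le_refl 0, hrpos⟩⟩
      set B : {s : ℚ // 0 ≤ s ∧ s < r} → Set Ω := fun s => LIter T (rs ++ [(s : ℚ)]) A with hB
      have hBmeas : ∀ s, MeasurableSet (B s) := fun s =>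
        LIter_measurable T hmeas (rs ++ [(s : ℚ)]) hA
      have hanti : ∀ i j : {s : ℚ // 0 ≤ s ∧ s < r}, i ≤ j → B j ⊆ B i := by
        intro i j hij
        have h1 : Lset T (j : ℚ) A ⊆ Lset T (i : ℚ) A := Lset_anti T (by exact_mod_cast hij) A
        have : LIter T (rs ++ [(j : ℚ)]) A = LIter T rs (Lset T (j : ℚ) A) := by
          simp [LIter, List.foldr_append]
        rw [hB]
        simp only [LIter, List.foldr_append]
        exact LIter_mono T rs h1
      have hdir : Directed (· ⊇ ·) B := by
        intro i j
        rcases le_total i j with h | h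
        · exact ⟨j, hanti i j h, subset_rfl⟩
        · exact ⟨i, subset_rfl, hanti j i h⟩
      ext w
      have := hprob w
      have hmeq : T w (⋂ s, B s) = ⨅ s, T w (B s) :=
        Directed.measure_iInter (fun s => (hBmeas s).nullMeasurableSet) hdir
          ⟨Classical.arbitrary _, measure_ne_top _ _⟩
      show ENNReal.ofReal (q : ℝ) ≤ T w (⋂ s, B s) ↔
        w ∈ ⋂ s : {s : ℚ // 0 ≤ s ∧ s < r}, Lset T q (B s)
      rw [hmeq, le_iInf_iff]
      simp only [Set.mem_iInter, Lset, Set.mem_setOf_eq]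
    · -- r = 0 : empty index
      haveI : IsEmpty {s : ℚ // 0 ≤ s ∧ s < r} :=
        ⟨fun s => hrpos (lt_of_le_of_lt s.2.1 s.2.2)⟩
      rw [Set.iInter_of_empty, Set.iInter_of_empty, Lset_univ T hprob hq.2]
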